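/- arXiv:0907.1436 — 3 statements merged into one kernel-verified Lean document; each statement's English description precedes it below -/
import Mathlib

section
/- Let (x_t) solve the recursion x_{t+1} = x_t − sat_r(x_t) + w_t in R^d, where (w_t) are random vectors with sup_t E[‖w_t‖] ≤ C₁ < r. Define ξ_t = ‖x_t‖ and let (𝔉_t) be the natural filtration, with w_t independent of 𝔉_t. Then on the event {ξ_t > r}, E[ξ_{t+1} − ξ_t | 𝔉_t] ≤ −(r − C₁). -/
open MeasureTheory ProbabilityTheory

/-- The radial saturation function. -/
noncomputable def sat {d : ℕ} (r : ℝ) (y : EuclideanSpace ℝ (Fin d)) :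
    EuclideanSpace ℝ (Fin d) :=
  if ‖y‖ ≤ r then y else (r / ‖y‖) • y

/-- drift condition for the saturated random walk
`x_{t+1} = x_t − sat_r(x_t) + w_t`: if `sup_t E[‖w_t‖] ≤ C₁ < r`, `ξ_t = ‖x_t‖`, the process
is adapted to the filtration `ℱ` and `w_t` is independent of `ℱ t`, then on `{ξ_t > r}` we
have `E[ξ_{t+1} − ξ_t | ℱ t] ≤ −(r − C₁)`. -/
theorem stmt5 {d : ℕ} {Ω : Type*} {m0 : MeasurableSpace Ω} {μ : Measure Ω}
    [IsProbabilityMeasure μ] (ℱ : Filtration ℕ m0)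
    (r C₁ : ℝ) (hC₁ : 0 < C₁) (hr : C₁ < r)
    (x w : ℕ → Ω → EuclideanSpace ℝ (Fin d))
    (hx_adapted : Adapted ℱ x)
    (hw_meas : ∀ t, Measurable (w t))
    (hw_int : ∀ t, Integrable (w t) μ)
    (hw_mean : ∀ t, ∫ ω, w t ω ∂μ = 0)
    (hw_indep : ∀ t, Indep (MeasurableSpace.comap (w t) inferInstance) (ℱ t) μ)
    (hw_abs : ∀ t, ∫ ω, ‖w t ω‖ ∂μ ≤ C₁)
    (hrec : ∀ t ω, x (t + 1) ω = x t ω - sat r (x t ω) + w t ω)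
    (hx_int : ∀ t, Integrable (fun ω => ‖x t ω‖) μ)
    (t : ℕ) :
    ∀ᵐ ω ∂μ, r < ‖x t ω‖ →
      (μ[fun ω' => ‖x (t + 1) ω'‖ - ‖x t ω'‖ | ℱ t]) ω ≤ -(r - C₁) := by
  set A : Set Ω := {ω | r < ‖x t ω‖} with hA
  have hxm : Measurable[ℱ t] (x t) := hx_adapted t
  have hAmeas : MeasurableSet[ℱ t] A := (measurable_norm.comp hxm) measurableSet_Ioi
  have hAmeas0 : MeasurableSet A := ℱ.le t _ hAmeas
  set f : Ω → ℝ := fun ω => ‖x (t + 1) ω‖ - ‖x t ω‖ with hf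
  set g : Ω → ℝ := fun ω => -r + ‖w t ω‖ with hg
  have hf_int : Integrable f μ := (hx_int (t + 1)).sub (hx_int t)
  have hg_int : Integrable g μ := (integrable_const _).add (hw_int t).norm
  -- pointwise bound on A
  have hbound : ∀ ω ∈ A, f ω ≤ g ω := by
    intro ω hω
    have hξ : r < ‖x t ω‖ := hω
    have hξpos : 0 < ‖x t ω‖ := lt_trans (lt_trans hC₁ hr) hξ
    have hsat : sat r (x t ω) = (r / ‖x t ω‖) • x t ω := by
      rw [sat, if_neg (not_le.mpr hξ)]
    have hkey : ‖x t ω - sat r (x t ω)‖ = ‖x t ω‖ - r := by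
      rw [hsat]
      have : x t ω - (r / ‖x t ω‖) • x t ω = (1 - r / ‖x t ω‖) • x t ω := by
        rw [sub_smul, one_smul]
      rw [this, norm_smul]
      rw [Real.norm_eq_abs, abs_of_nonneg (by
        have : r / ‖x t ω‖ < 1 := (div_lt_one hξpos).mpr hξ
        linarith)]
      field_simp
    have : ‖x (t + 1) ω‖ ≤ ‖x t ω‖ - r + ‖w t ω‖ := by
      rw [hrec t ω]
      calc ‖x t ω - sat r (x t ω) + w t ω‖
          ≤ ‖x t ω - sat r (x t ω)‖ + ‖w t ω‖ := norm_add_le _ _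
        _ = ‖x t ω‖ - r + ‖w t ω‖ := by rw [hkey]
    simp only [hf, hg]; linarith
  have hind_le : A.indicator f ≤ A.indicator g := by
    intro ω
    by_cases hω : ω ∈ A
    · simpa [Set.indicator_of_mem hω] using hbound ω hω
    · simp [Set.indicator_of_notMem hω]
  -- conditional expectation manipulations
  have h1 : μ[A.indicator f | ℱ t] =ᵐ[μ] A.indicator (μ[f | ℱ t]) :=
    condExp_indicator hf_int hAmeas
  have h2 : μ[A.indicator g | ℱ t] =ᵐ[μ] A.indicator (μ[g | ℱ t]) :=
    condExp_indicator hg_int hAmeas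
  have hmono : μ[A.indicator f | ℱ t] ≤ᵐ[μ] μ[A.indicator g | ℱ t] :=
    condExp_mono (hf_int.indicator hAmeas0) (hg_int.indicator hAmeas0)
      (Filter.Eventually.of_forall hind_le)
  -- E[g | ℱ t] = -r + E[‖w t‖]
  have hnorm_sm : StronglyMeasurable[MeasurableSpace.comap (w t) inferInstance]
      (fun ω => ‖w t ω‖) := by
    exact ((measurable_norm.comp (Measurable.of_comap_le le_rfl))).stronglyMeasurable
  have hindep' : Indep (MeasurableSpace.comap (w t) inferInstance) (ℱ t) μ := hw_indep t
  have hcg : μ[(fun ω => ‖w t ω‖) | ℱ t] =ᵐ[μ] fun _ => ∫ ω, ‖w t ω‖ ∂μ :=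
    condExp_indep_eq (by
        rw [MeasurableSpace.comap_le_iff_le_map]
        exact (hw_meas t).le_map) (ℱ.le t) hnorm_sm hindep'
  have hcg2 : μ[g | ℱ t] =ᵐ[μ] fun _ => -r + ∫ ω, ‖w t ω‖ ∂μ := by
    have hadd : μ[g | ℱ t] =ᵐ[μ]
        μ[(fun _ : Ω => -r) | ℱ t] + μ[(fun ω => ‖w t ω‖) | ℱ t] :=
      condExp_add (μ := μ) (m := ℱ t) (integrable_const (-r)) (hw_int t).norm
    filter_upwards [hadd, hcg] with ω h h'
    rw [h]
    simp [Pi.add_apply, condExp_const (ℱ.le t), h']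
  filter_upwards [h1, h2, hmono, hcg2] with ω e1 e2 e3 e4 hω
  have hωA : ω ∈ A := hω
  have : (μ[f | ℱ t]) ω ≤ (μ[g | ℱ t]) ω := by
    have := e3
    rw [e1, e2] at this
    simpa [Set.indicator_of_mem hωA] using this
  calc (μ[f | ℱ t]) ω ≤ (μ[g | ℱ t]) ω := this
    _ = -r + ∫ ω, ‖w t ω‖ ∂μ := e4
    _ ≤ -r + C₁ := by linarith [hw_abs t]
    _ = -(r - C₁) := by ring
end

section
/- Deterministic finite-time convergence of the saturated closed loop: let A be an orthogonal d×d matrix, r > 0, and consider the deterministic recursion x_{τ+1} = A x_τ − A sat_r(x_τ) with x_0 = x ∈ R^d. Then there exists a finite time τ̄ (one may take τ̄ = ⌈‖x‖/r⌉) such that x_τ = 0 for all τ ≥ τ̄. -/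
open Matrix RealInnerProductSpace

lemma norm_toEuclideanLin_eq {d : ℕ} (A : Matrix (Fin d) (Fin d) ℝ)
    (hA : Aᵀ * A = 1) (y : EuclideanSpace ℝ (Fin d)) :
    ‖Matrix.toEuclideanLin A y‖ = ‖y‖ := by
  have hcomp : Matrix.toEuclideanLin Aᵀ (Matrix.toEuclideanLin A y) = y := by
    simp only [Matrix.toEuclideanLin_apply]
    simp [Matrix.mulVec_mulVec, hA]
  have hadj : Matrix.toEuclideanLin Aᵀ = LinearMap.adjoint (Matrix.toEuclideanLin A) := by
    rw [← Matrix.toEuclideanLin_conjTranspose_eq_adjoint]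
    congr 1
  have h : ⟪Matrix.toEuclideanLin A y, Matrix.toEuclideanLin A y⟫ = ⟪y, y⟫ := by
    calc ⟪Matrix.toEuclideanLin A y, Matrix.toEuclideanLin A y⟫
        = ⟪y, LinearMap.adjoint (Matrix.toEuclideanLin A) (Matrix.toEuclideanLin A y)⟫ := by
          rw [LinearMap.adjoint_inner_right]
      _ = ⟪y, y⟫ := by rw [← hadj, hcomp]
  have := congrArg Real.sqrt h
  rwa [real_inner_self_eq_norm_sq, real_inner_self_eq_norm_sq,
    Real.sqrt_sq (norm_nonneg _), Real.sqrt_sq (norm_nonneg _)] at this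

/-- deterministic finite-time convergence of the saturated closed loop
`x_{τ+1} = A x_τ − A sat_r(x_τ)` with `A` orthogonal: there is a finite time `τ̄`
(one may take `τ̄ = ⌈‖x‖/r⌉`) such that `x_τ = 0` for all `τ ≥ τ̄`. -/
theorem stmt7 {d : ℕ} (r : ℝ) (hr : 0 < r) (A : Matrix (Fin d) (Fin d) ℝ)
    (hA : Aᵀ * A = 1) (x₀ : EuclideanSpace ℝ (Fin d))
    (x : ℕ → EuclideanSpace ℝ (Fin d)) (hx0 : x 0 = x₀)
    (hrec : ∀ τ, x (τ + 1) =
      Matrix.toEuclideanLin A (x τ) - Matrix.toEuclideanLin A (sat r (x τ))) :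
    ∃ τbar : ℕ, ∀ τ ≥ τbar, x τ = 0 := by
  -- if current iterate has small norm, next is zero
  have hsmall : ∀ τ, ‖x τ‖ ≤ r → x (τ + 1) = 0 := by
    intro τ hτ
    rw [hrec τ, sat, if_pos hτ, sub_self]
  -- if current iterate has large norm, norm drops by r
  have hbig : ∀ τ, ¬ ‖x τ‖ ≤ r → ‖x (τ + 1)‖ = ‖x τ‖ - r := by
    intro τ hτ
    push_neg at hτ
    have hy : (0:ℝ) < ‖x τ‖ := lt_trans hr hτ
    rw [hrec τ, ← map_sub, norm_toEuclideanLin_eq A hA]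
    have : x τ - sat r (x τ) = (1 - r / ‖x τ‖) • x τ := by
      rw [sat, if_neg (not_le.mpr hτ), sub_smul, one_smul]
    rw [this, norm_smul, Real.norm_eq_abs, abs_of_nonneg, sub_mul, one_mul,
      div_mul_cancel₀ _ (ne_of_gt hy)]
    have : r / ‖x τ‖ < 1 := (div_lt_one hy).mpr hτ
    linarith
  -- zero stays zero
  have hzero : ∀ τ, x τ = 0 → x (τ + 1) = 0 := by
    intro τ h
    exact hsmall τ (by rw [h]; simp [hr.le])
  -- decrease invariant
  have key : ∀ τ, x τ = 0 ∨ ‖x τ‖ ≤ ‖x₀‖ - τ * r := by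
    intro τ
    induction τ with
    | zero => right; simp [hx0]
    | succ n ih =>
      rcases ih with h | h
      · exact Or.inl (hzero n h)
      · by_cases hc : ‖x n‖ ≤ r
        · exact Or.inl (hsmall n hc)
        · right
          rw [hbig n hc]
          push_cast
          nlinarith
  obtain ⟨N, hN⟩ : ∃ N : ℕ, ‖x₀‖ - N * r < 0 := by
    refine ⟨⌈‖x₀‖ / r⌉₊ + 1, ?_⟩
    have h1 : ‖x₀‖ / r ≤ ⌈‖x₀‖ / r⌉₊ := Nat.le_ceil _
    have h2 : ‖x₀‖ ≤ ⌈‖x₀‖ / r⌉₊ * r := by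
      rw [← div_le_iff₀ hr]; exact h1
    push_cast
    nlinarith
  have hxN : x N = 0 := by
    rcases key N with h | h
    · exact h
    · exact absurd (lt_of_le_of_lt h hN) (by simp [norm_nonneg])
  refine ⟨N, fun τ hτ => ?_⟩
  obtain ⟨k, rfl⟩ := Nat.exists_eq_add_of_le hτ
  induction k with
  | zero => exact hxN
  | succ m ih =>
    exact hzero (N + m) (ih (Nat.le_add_right _ _))
end

section
/- Suppose a process in R^d satisfies x_{t+1} = A x_t + B u_t + w_t with A orthogonal, ‖u_t‖ ≤ ρ for all t, E[w_t] = 0, E[‖w_t‖²] ≤ √C₄ for all t, w_t independent of x_t and u_t measurable with respect to the past, and suppose the sub-sampled process satisfies sup_τ E[‖x_{τk}‖²] ≤ c. Then for every n ∈ {0,…,k−1}, sup_τ E[‖x_{τk+n}‖²] ≤ 2(c + n² ρ² σ₁(B)²) + k√C₄, where σ₁(B) is the largest singular value of B; hence sup_t E[‖x_t‖²] < ∞. -/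
open Matrix MeasureTheory ProbabilityTheory

private lemma aux_int_le_sqrt {Ω : Type*} {m0 : MeasurableSpace Ω} {μ : Measure Ω}
    [IsProbabilityMeasure μ] {g : Ω → ℝ} (hg0 : ∀ ω, 0 ≤ g ω)
    (hg1 : Integrable g μ) (hg2 : Integrable (fun ω => g ω ^ 2) μ) :
    ∫ ω, g ω ∂μ ≤ Real.sqrt (∫ ω, g ω ^ 2 ∂μ) := by
  set m := ∫ ω, g ω ∂μ with hm
  have hm0 : 0 ≤ m := integral_nonneg hg0
  have hvar : 0 ≤ ∫ ω, (g ω - m) ^ 2 ∂μ := integral_nonneg fun ω => sq_nonneg _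
  have hexp : ∫ ω, (g ω - m) ^ 2 ∂μ = (∫ ω, g ω ^ 2 ∂μ) - m ^ 2 := by
    have hpt : (fun ω => (g ω - m) ^ 2) = fun ω => g ω ^ 2 - 2 * m * g ω + m ^ 2 := by
      funext ω; ring
    have hi1 : Integrable (fun ω => g ω ^ 2 - 2 * m * g ω) μ := hg2.sub (hg1.const_mul (2 * m))
    have hi1' : Integrable (fun ω => 2 * m * g ω) μ := hg1.const_mul (2 * m)
    rw [hpt, integral_add hi1 (integrable_const _), integral_sub hg2 hi1',
      integral_const_mul, integral_const]
    simp [measure_univ, ← hm]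
    ring
  rw [Real.le_sqrt hm0 (by nlinarith)]
  linarith [hexp ▸ hvar]

private lemma aux_sq_exp {Ω : Type*} {m0 : MeasurableSpace Ω} {μ : Measure Ω}
    [IsProbabilityMeasure μ] {g : Ω → ℝ} {s : ℝ} (hs : 0 ≤ s) (hg0 : ∀ ω, 0 ≤ g ω)
    (hg1 : Integrable g μ) (hg2 : Integrable (fun ω => g ω ^ 2) μ) :
    Integrable (fun ω => (g ω + s) ^ 2) μ ∧
      ∫ ω, (g ω + s) ^ 2 ∂μ ≤ (Real.sqrt (∫ ω, g ω ^ 2 ∂μ) + s) ^ 2 := by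
  have hpt : (fun ω => (g ω + s) ^ 2) = fun ω => g ω ^ 2 + (2 * s * g ω + s ^ 2) := by
    funext ω; ring
  have hi2 : Integrable (fun ω => 2 * s * g ω + s ^ 2) μ :=
    (hg1.const_mul _).add (integrable_const _)
  constructor
  · rw [hpt]; exact hg2.add hi2
  · have hi3 : Integrable (fun ω => 2 * s * g ω) μ := hg1.const_mul _
    rw [hpt, integral_add hg2 hi2, integral_add hi3 (integrable_const _),
      integral_const_mul, integral_const]
    have h1 : ∫ ω, g ω ∂μ ≤ Real.sqrt (∫ ω, g ω ^ 2 ∂μ) := aux_int_le_sqrt hg0 hg1 hg2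
    have h2 : Real.sqrt (∫ ω, g ω ^ 2 ∂μ) ^ 2 = ∫ ω, g ω ^ 2 ∂μ :=
      Real.sq_sqrt (integral_nonneg fun ω => sq_nonneg _)
    have h3 : 0 ≤ ∫ ω, g ω ∂μ := integral_nonneg hg0
    simp only [measure_univ, probReal_univ, ENNReal.toReal_one, smul_eq_mul, one_mul]
    nlinarith


private lemma aux_step {qj qj1 c σ2 s j : ℝ} (hc : 0 ≤ c) (hσ : 0 ≤ σ2) (hs : 0 ≤ s)
    (hj : 0 ≤ j)
    (ih : Real.sqrt qj ≤ Real.sqrt (c + j * σ2) + j * s)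
    (hstep : qj1 ≤ (Real.sqrt qj + s) ^ 2 + σ2) :
    Real.sqrt qj1 ≤ Real.sqrt (c + (j + 1) * σ2) + (j + 1) * s := by
  have hbj : (0:ℝ) ≤ c + j * σ2 := by positivity
  have hbj1 : (0:ℝ) ≤ c + (j + 1) * σ2 := by positivity
  have hb1 : Real.sqrt (c + j * σ2) ^ 2 = c + j * σ2 := Real.sq_sqrt hbj
  have hb2 : Real.sqrt (c + (j + 1) * σ2) ^ 2 = c + (j + 1) * σ2 := Real.sq_sqrt hbj1
  have hmono : Real.sqrt (c + j * σ2) ≤ Real.sqrt (c + (j + 1) * σ2) :=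
    Real.sqrt_le_sqrt (by nlinarith)
  have hq2 : qj1 ≤ (Real.sqrt (c + (j + 1) * σ2) + (j + 1) * s) ^ 2 := by
    have hsq : (Real.sqrt qj + s) ^ 2 ≤ (Real.sqrt (c + j * σ2) + j * s + s) ^ 2 := by
      have h0 : (0:ℝ) ≤ Real.sqrt qj + s := by positivity
      nlinarith [Real.sqrt_nonneg qj, Real.sqrt_nonneg (c + j * σ2)]
    have hkey : 2 * (j + 1) * s * Real.sqrt (c + j * σ2)
        ≤ 2 * (j + 1) * s * Real.sqrt (c + (j + 1) * σ2) := by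
      apply mul_le_mul_of_nonneg_left hmono
      positivity
    nlinarith [Real.sqrt_nonneg (c + j * σ2), Real.sqrt_nonneg (c + (j + 1) * σ2)]
  calc Real.sqrt qj1 ≤ Real.sqrt ((Real.sqrt (c + (j + 1) * σ2) + (j + 1) * s) ^ 2) :=
        Real.sqrt_le_sqrt hq2
    _ = Real.sqrt (c + (j + 1) * σ2) + (j + 1) * s := Real.sqrt_sq (by positivity)

private lemma aux_caseA {qv c σ2 s n k : ℝ} (hc : 0 ≤ c) (hσ : 0 ≤ σ2) (hs : 0 ≤ s)
    (hn : 0 ≤ n) (h2nk : 2 * n ≤ k)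
    (h : Real.sqrt qv ≤ Real.sqrt (c + n * σ2) + n * s) (hq : 0 ≤ qv) :
    qv ≤ 2 * (c + n ^ 2 * s ^ 2) + k * σ2 := by
  have hX : (0:ℝ) ≤ c + n * σ2 := by positivity
  have hsq : Real.sqrt (c + n * σ2) ^ 2 = c + n * σ2 := Real.sq_sqrt hX
  have h1 : Real.sqrt qv ^ 2 = qv := Real.sq_sqrt hq
  have hq' : qv ≤ (Real.sqrt (c + n * σ2) + n * s) ^ 2 := by
    nlinarith [Real.sqrt_nonneg qv, Real.sqrt_nonneg (c + n * σ2), mul_nonneg hn hs]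
  nlinarith [sq_nonneg (Real.sqrt (c + n * σ2) - n * s), Real.sqrt_nonneg (c + n * σ2),
    mul_nonneg hn hσ]

private lemma aux_caseB {qv c s σ2 m n k : ℝ} (hc : 0 ≤ c) (hs : 0 ≤ s) (hσ : 0 ≤ σ2)
    (hm : 0 ≤ m) (hmn : m ≤ n) (hk : 0 ≤ k)
    (h : Real.sqrt qv ≤ Real.sqrt c + m * s) (hq : 0 ≤ qv) :
    qv ≤ 2 * (c + n ^ 2 * s ^ 2) + k * σ2 := by
  have h1 : Real.sqrt qv ^ 2 = qv := Real.sq_sqrt hq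
  have hsqc : Real.sqrt c ^ 2 = c := Real.sq_sqrt hc
  have hq' : qv ≤ (Real.sqrt c + m * s) ^ 2 := by
    nlinarith [Real.sqrt_nonneg qv, Real.sqrt_nonneg c, mul_nonneg hm hs]
  have hm2 : m ^ 2 ≤ n ^ 2 := by nlinarith
  nlinarith [sq_nonneg (Real.sqrt c - m * s), Real.sqrt_nonneg c, mul_nonneg hk hσ, sq_nonneg s]

private lemma aux_enlarge {qv c n k r1 r2 σ2 : ℝ} (h : qv ≤ 2 * (c + n ^ 2 * r1 * r2) + k * σ2)
    (hn : 0 ≤ n) (hnk : n ≤ k) (hr1 : 0 ≤ r1) (hr2 : 0 ≤ r2) :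
    qv ≤ 2 * (c + k ^ 2 * r1 * r2) + k * σ2 := by
  nlinarith [mul_le_mul_of_nonneg_right (mul_le_mul_of_nonneg_right
    (by nlinarith : n ^ 2 ≤ k ^ 2) hr1) hr2]

set_option maxHeartbeats 2000000 in
/-- if `x_{t+1} = A x_t + B u_t + w_t` with `A` orthogonal, `‖u_t‖ ≤ ρ`,
mean-zero noise with `E[‖w_t‖²] ≤ √C₄` independent of the past, and the sub-sampled process
satisfies `sup_τ E[‖x_{τk}‖²] ≤ c`, then for every `n ∈ {0,…,k−1}` one has
`sup_τ E[‖x_{τk+n}‖²] ≤ 2(c + n² ρ² σ₁(B)²) + k √C₄`, where `σ₁(B)` is the largest singular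
value (operator norm) of `B`; hence `sup_t E[‖x_t‖²] < ∞`. -/
theorem stmt18 {d m k : ℕ} (hk : 0 < k) {Ω : Type*} {m0 : MeasurableSpace Ω}
    (μ : Measure Ω) [IsProbabilityMeasure μ] (ℱ : Filtration ℕ m0)
    (A : Matrix (Fin d) (Fin d) ℝ) (hA : Aᵀ * A = 1)
    (B : Matrix (Fin d) (Fin m) ℝ)
    (ρ C₄ c : ℝ) (hρ : 0 ≤ ρ) (hC₄ : 0 ≤ C₄) (hc : 0 ≤ c)
    (x : ℕ → Ω → EuclideanSpace ℝ (Fin d))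
    (u : ℕ → Ω → EuclideanSpace ℝ (Fin m))
    (w : ℕ → Ω → EuclideanSpace ℝ (Fin d))
    (hx_adapted : Adapted ℱ x) (hu_adapted : Adapted ℱ u)
    (hw_meas : ∀ t, Measurable (w t))
    (hw_indep : ∀ t, Indep (MeasurableSpace.comap (w t) inferInstance) (ℱ t) μ)
    (hw_int : ∀ t, Integrable (w t) μ)
    (hw_int2 : ∀ t, Integrable (fun ω => ‖w t ω‖ ^ 2) μ)
    (hw_mean : ∀ t, ∫ ω, w t ω ∂μ = 0)
    (hw_mom2 : ∀ t, ∫ ω, ‖w t ω‖ ^ 2 ∂μ ≤ Real.sqrt C₄)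
    (hu_bdd : ∀ t ω, ‖u t ω‖ ≤ ρ)
    (hrec : ∀ t ω, x (t + 1) ω = Matrix.toEuclideanLin A (x t ω)
      + Matrix.toEuclideanLin B (u t ω) + w t ω)
    (hx_int2 : ∀ t, Integrable (fun ω => ‖x t ω‖ ^ 2) μ)
    (hsub : ∀ τ : ℕ, ∫ ω, ‖x (τ * k) ω‖ ^ 2 ∂μ ≤ c) :
    (∀ n < k, ∀ τ : ℕ, ∫ ω, ‖x (τ * k + n) ω‖ ^ 2 ∂μ ≤
      2 * (c + (n : ℝ) ^ 2 * ρ ^ 2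
          * ‖LinearMap.toContinuousLinearMap (Matrix.toEuclideanLin B)‖ ^ 2)
        + (k : ℝ) * Real.sqrt C₄) ∧
    ∃ c' : ℝ, ∀ t, ∫ ω, ‖x t ω‖ ^ 2 ∂μ ≤ c' := by
  classical
  obtain ⟨L, hL_def⟩ : ∃ L' : EuclideanSpace ℝ (Fin m) →L[ℝ] EuclideanSpace ℝ (Fin d),
      L' = LinearMap.toContinuousLinearMap (Matrix.toEuclideanLin B) := ⟨_, rfl⟩
  obtain ⟨s, hs_def⟩ : ∃ s' : ℝ, s' = ρ * ‖L‖ := ⟨_, rfl⟩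
  obtain ⟨σ2, hσ2_def⟩ : ∃ σ' : ℝ, σ' = Real.sqrt C₄ := ⟨_, rfl⟩
  obtain ⟨q, hqe⟩ : ∃ q' : ℕ → ℝ, ∀ t, q' t = ∫ ω, ‖x t ω‖ ^ 2 ∂μ := ⟨_, fun _ => rfl⟩
  rw [← hL_def, ← hσ2_def]
  have hσ2_nonneg : 0 ≤ σ2 := hσ2_def ▸ Real.sqrt_nonneg _
  have hs_nonneg : 0 ≤ s := hs_def ▸ mul_nonneg hρ (norm_nonneg _)
  have hq_nonneg : ∀ t, 0 ≤ q t := fun t => (hqe t) ▸ integral_nonneg fun ω => sq_nonneg _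
  have hsub' : ∀ τ : ℕ, q (τ * k) ≤ c := fun τ => (hqe _) ▸ hsub τ
  have hw_mom2' : ∀ t, ∫ ω, ‖w t ω‖ ^ 2 ∂μ ≤ σ2 := fun t => hσ2_def ▸ hw_mom2 t
  -- the matrix A preserves norms
  have hAnorm : ∀ v : EuclideanSpace ℝ (Fin d), ‖Matrix.toEuclideanLin A v‖ = ‖v‖ := by
    intro v
    have hAA : ∀ z : EuclideanSpace ℝ (Fin d),
        Matrix.toEuclideanLin Aᵀ (Matrix.toEuclideanLin A z) = z := by
      intro z
      rw [Matrix.toEuclideanLin_apply, Matrix.toEuclideanLin_apply]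
      rw [WithLp.ofLp_toLp, Matrix.mulVec_mulVec, hA, Matrix.one_mulVec,
        WithLp.toLp_ofLp]
    have h1 : (inner ℝ (Matrix.toEuclideanLin A v) (Matrix.toEuclideanLin A v) : ℝ)
        = inner ℝ v v := by
      calc (inner ℝ (Matrix.toEuclideanLin A v) (Matrix.toEuclideanLin A v) : ℝ)
          = inner ℝ v ((LinearMap.adjoint (Matrix.toEuclideanLin A)) (Matrix.toEuclideanLin A v)) :=
            (LinearMap.adjoint_inner_right _ _ _).symm
        _ = inner ℝ v (Matrix.toEuclideanLin Aᴴ (Matrix.toEuclideanLin A v)) := by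
            rw [Matrix.toEuclideanLin_conjTranspose_eq_adjoint]
        _ = (inner ℝ v v : ℝ) := by
            rw [Matrix.conjTranspose_eq_transpose_of_trivial, hAA v]
    have h2 := real_inner_self_eq_norm_sq (Matrix.toEuclideanLin A v)
    have h3 := real_inner_self_eq_norm_sq v
    nlinarith [norm_nonneg (Matrix.toEuclideanLin A v), norm_nonneg v]
  have hBnorm : ∀ v : EuclideanSpace ℝ (Fin m), ‖Matrix.toEuclideanLin B v‖ ≤ ‖L‖ * ‖v‖ := by
    intro v
    have := L.le_opNorm v
    rw [hL_def] at this ⊢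
    simpa using this
  -- the deterministic one-step map
  obtain ⟨y, hy_app⟩ : ∃ y' : ℕ → Ω → EuclideanSpace ℝ (Fin d), ∀ t ω,
      y' t ω = Matrix.toEuclideanLin A (x t ω) + Matrix.toEuclideanLin B (u t ω) :=
    ⟨_, fun _ _ => rfl⟩
  have hx_succ : ∀ t ω, x (t + 1) ω = y t ω + w t ω := fun t ω => by
    rw [hy_app]; exact hrec t ω
  have hy_le : ∀ t ω, ‖y t ω‖ ≤ ‖x t ω‖ + s := by
    intro t ω
    have h1 : ‖y t ω‖ ≤ ‖Matrix.toEuclideanLin A (x t ω)‖ + ‖Matrix.toEuclideanLin B (u t ω)‖ := by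
      rw [hy_app]; exact norm_add_le _ _
    have h2 := hBnorm (u t ω)
    have h3 : ‖L‖ * ‖u t ω‖ ≤ ‖L‖ * ρ :=
      mul_le_mul_of_nonneg_left (hu_bdd t ω) (norm_nonneg _)
    rw [hAnorm] at h1
    rw [hs_def]
    linarith [h1, h2, h3, mul_comm ρ ‖L‖ ▸ le_refl (ρ * ‖L‖)]
  have hx_le : ∀ t ω, ‖x t ω‖ ≤ ‖y t ω‖ + s := by
    intro t ω
    have hxy : Matrix.toEuclideanLin A (x t ω) = y t ω - Matrix.toEuclideanLin B (u t ω) := by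
      rw [hy_app]; abel
    have h1 : ‖x t ω‖ = ‖Matrix.toEuclideanLin A (x t ω)‖ := (hAnorm _).symm
    rw [h1, hxy]
    have h2 : ‖y t ω - Matrix.toEuclideanLin B (u t ω)‖
        ≤ ‖y t ω‖ + ‖Matrix.toEuclideanLin B (u t ω)‖ := norm_sub_le _ _
    have h3 := hBnorm (u t ω)
    have h4 : ‖L‖ * ‖u t ω‖ ≤ ‖L‖ * ρ :=
      mul_le_mul_of_nonneg_left (hu_bdd t ω) (norm_nonneg _)
    rw [hs_def]
    nlinarith
  -- measurability
  have hy_sm : ∀ t, StronglyMeasurable[ℱ t] (y t) := by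
    intro t
    have h1 : StronglyMeasurable[ℱ t] (fun ω => Matrix.toEuclideanLin A (x t ω)) :=
      (LinearMap.toContinuousLinearMap
        (Matrix.toEuclideanLin A)).continuous.comp_stronglyMeasurable (hx_adapted t).stronglyMeasurable
    have h2 : StronglyMeasurable[ℱ t] (fun ω => Matrix.toEuclideanLin B (u t ω)) := by
      have := (LinearMap.toContinuousLinearMap
        (Matrix.toEuclideanLin B)).continuous.comp_stronglyMeasurable (hu_adapted t).stronglyMeasurable
      exact this
    have h3 : y t = fun ω => Matrix.toEuclideanLin A (x t ω) + Matrix.toEuclideanLin B (u t ω) :=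
      funext fun ω => hy_app t ω
    rw [h3]
    exact h1.add h2
  have hy_m : ∀ t, Measurable (y t) := fun t => ((hy_sm t).mono (ℱ.le t)).measurable
  have hx_m : ∀ t, Measurable (x t) := fun t => ((hx_adapted t).stronglyMeasurable.mono (ℱ.le t)).measurable
  -- integrability
  have hx_int : ∀ t, Integrable (x t) μ := fun t =>
    ((memLp_two_iff_integrable_sq_norm (hx_m t).aestronglyMeasurable).2
      (hx_int2 t)).integrable one_le_two
  have hu_int : ∀ t, Integrable (u t) μ := fun t =>
    Integrable.mono' (integrable_const ρ)
      ((hu_adapted t).stronglyMeasurable.mono (ℱ.le t)).aestronglyMeasurable (ae_of_all _ (hu_bdd t))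
  have hy_int : ∀ t, Integrable (y t) μ := by
    intro t
    have h1 : Integrable (fun ω => Matrix.toEuclideanLin A (x t ω)) μ :=
      (LinearMap.toContinuousLinearMap (Matrix.toEuclideanLin A)).integrable_comp (hx_int t)
    have h2 : Integrable (fun ω => Matrix.toEuclideanLin B (u t ω)) μ :=
      (LinearMap.toContinuousLinearMap (Matrix.toEuclideanLin B)).integrable_comp (hu_int t)
    have h3 : y t = fun ω => Matrix.toEuclideanLin A (x t ω) + Matrix.toEuclideanLin B (u t ω) :=
      funext fun ω => hy_app t ω
    rw [h3]
    exact h1.add h2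
  have hy2_int : ∀ t, Integrable (fun ω => ‖y t ω‖ ^ 2) μ := by
    intro t
    refine Integrable.mono'
      (show Integrable (fun ω => 2 * ‖x t ω‖ ^ 2 + 2 * s ^ 2) μ from
        ((hx_int2 t).const_mul 2).add (integrable_const _))
      (((hy_m t).norm.pow_const 2).aestronglyMeasurable) (ae_of_all _ fun ω => ?_)
    have h1 := hy_le t ω
    have h2 := norm_nonneg (y t ω)
    have h3 := norm_nonneg (x t ω)
    rw [Real.norm_eq_abs, abs_of_nonneg (by positivity)]
    show ‖y t ω‖ ^ 2 ≤ 2 * ‖x t ω‖ ^ 2 + 2 * s ^ 2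
    nlinarith [sq_nonneg (‖x t ω‖ - s), sq_nonneg (‖x t ω‖ + s)]
  have hcross_int : ∀ t, Integrable (fun ω => (inner ℝ (y t ω) (w t ω) : ℝ)) μ := by
    intro t
    refine Integrable.mono'
      (show Integrable (fun ω => ‖y t ω‖ ^ 2 + ‖w t ω‖ ^ 2) μ from (hy2_int t).add (hw_int2 t))
      ((((hy_m t).inner (hw_meas t))).aestronglyMeasurable) (ae_of_all _ fun ω => ?_)
    have h1 := abs_real_inner_le_norm (y t ω) (w t ω)
    have h2 := norm_nonneg (y t ω)
    have h3 := norm_nonneg (w t ω)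
    rw [Real.norm_eq_abs]
    show |(inner ℝ (y t ω) (w t ω) : ℝ)| ≤ ‖y t ω‖ ^ 2 + ‖w t ω‖ ^ 2
    nlinarith [sq_nonneg (‖y t ω‖ - ‖w t ω‖)]
  -- cross term vanishes
  have hproj : ∀ i : Fin d, Measurable (fun v : EuclideanSpace ℝ (Fin d) => v i) := by
    intro i
    simpa using (EuclideanSpace.proj (𝕜 := ℝ) i).measurable
  have hcross0 : ∀ t, ∫ ω, (inner ℝ (y t ω) (w t ω) : ℝ) ∂μ = 0 := by
    intro t
    have hIndep : IndepFun (w t) (y t) μ :=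
      indep_of_indep_of_le_right (hw_indep t) ((hy_sm t).measurable.comap_le)
    have hyi : ∀ i : Fin d, Integrable (fun ω => y t ω i) μ := by
      intro i
      simpa using (EuclideanSpace.proj (𝕜 := ℝ) i).integrable_comp (hy_int t)
    have hwi : ∀ i : Fin d, Integrable (fun ω => w t ω i) μ := by
      intro i
      simpa using (EuclideanSpace.proj (𝕜 := ℝ) i).integrable_comp (hw_int t)
    have hindc : ∀ i : Fin d, IndepFun (fun ω => w t ω i) (fun ω => y t ω i) μ :=
      fun i => hIndep.comp (hproj i) (hproj i)
    have hint : ∀ i : Fin d, Integrable (fun ω => y t ω i * w t ω i) μ := by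
      intro i
      exact (hindc i).symm.integrable_mul (hyi i) (hwi i)
    have hinner : ∀ ω, (inner ℝ (y t ω) (w t ω) : ℝ) = ∑ i : Fin d, y t ω i * w t ω i := by
      intro ω
      simp [PiLp.inner_apply, RCLike.inner_apply, starRingEnd_apply, star_trivial]
      exact Finset.sum_congr rfl fun _ _ => mul_comm _ _
    calc ∫ ω, (inner ℝ (y t ω) (w t ω) : ℝ) ∂μ
        = ∫ ω, ∑ i : Fin d, y t ω i * w t ω i ∂μ := by
          exact integral_congr_ae (ae_of_all _ hinner)
      _ = ∑ i : Fin d, ∫ ω, y t ω i * w t ω i ∂μ :=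
          integral_finset_sum _ fun i _ => hint i
      _ = 0 := by
          refine Finset.sum_eq_zero fun i _ => ?_
          have hzero : ∫ ω, w t ω i ∂μ = 0 := by
            have h1 := (EuclideanSpace.proj (𝕜 := ℝ) i).integral_comp_comm (hw_int t)
            rw [hw_mean t] at h1
            simpa using h1
          have h2 := (hindc i).integral_fun_mul_eq_mul_integral (hwi i).aestronglyMeasurable
            (hyi i).aestronglyMeasurable
          have h3 : ∫ ω, y t ω i * w t ω i ∂μ = ∫ ω, w t ω i * y t ω i ∂μ := by
            congr 1; funext ω; ring
          rw [h3, h2, hzero, zero_mul]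
  -- the key identity
  have hIdent : ∀ t, q (t + 1) = (∫ ω, ‖y t ω‖ ^ 2 ∂μ) + ∫ ω, ‖w t ω‖ ^ 2 ∂μ := by
    intro t
    have hpt : ∀ ω, ‖x (t + 1) ω‖ ^ 2
        = ‖y t ω‖ ^ 2 + (2 * (inner ℝ (y t ω) (w t ω) : ℝ) + ‖w t ω‖ ^ 2) := by
      intro ω
      rw [hx_succ t ω, norm_add_sq_real]
      ring
    have hi4 : Integrable (fun ω => 2 * (inner ℝ (y t ω) (w t ω) : ℝ) + ‖w t ω‖ ^ 2) μ :=
      ((hcross_int t).const_mul 2).add (hw_int2 t)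
    have hi5 : Integrable (fun ω => 2 * (inner ℝ (y t ω) (w t ω) : ℝ)) μ :=
      (hcross_int t).const_mul 2
    calc q (t + 1) = ∫ ω, (‖y t ω‖ ^ 2
          + (2 * (inner ℝ (y t ω) (w t ω) : ℝ) + ‖w t ω‖ ^ 2)) ∂μ := by
          rw [hqe (t + 1)]
          exact integral_congr_ae (ae_of_all _ hpt)
      _ = (∫ ω, ‖y t ω‖ ^ 2 ∂μ) + ∫ ω, ‖w t ω‖ ^ 2 ∂μ := by
          rw [integral_add (hy2_int t) hi4, integral_add hi5 (hw_int2 t),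
            integral_const_mul, hcross0 t]
          ring
  -- forward one-step bound
  have stepF : ∀ t, q (t + 1) ≤ (Real.sqrt (q t) + s) ^ 2 + σ2 := by
    intro t
    have hexp := aux_sq_exp (μ := μ) hs_nonneg (fun ω => norm_nonneg (x t ω))
      (hx_int t).norm (hx_int2 t)
    have hmono : ∫ ω, ‖y t ω‖ ^ 2 ∂μ ≤ ∫ ω, (‖x t ω‖ + s) ^ 2 ∂μ := by
      refine integral_mono (hy2_int t) hexp.1 fun ω => ?_
      have h1 := hy_le t ω
      have h2 := norm_nonneg (y t ω)
      have h3 := norm_nonneg (x t ω)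
      nlinarith
    have h4 := hIdent t
    have h5 := hw_mom2 t
    have h6 := hexp.2
    rw [← hqe t] at h6
    linarith
  -- backward one-step bound
  have stepB : ∀ t, Real.sqrt (q t) ≤ Real.sqrt (q (t + 1)) + s := by
    intro t
    have hexp := aux_sq_exp (μ := μ) hs_nonneg (fun ω => norm_nonneg (y t ω))
      (hy_int t).norm (hy2_int t)
    have hmono : q t ≤ ∫ ω, (‖y t ω‖ + s) ^ 2 ∂μ := by
      rw [hqe t]
      refine integral_mono (hx_int2 t) hexp.1 fun ω => ?_
      have h1 := hx_le t ω
      have h2 := norm_nonneg (y t ω)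
      have h3 := norm_nonneg (x t ω)
      nlinarith
    have hY : ∫ ω, ‖y t ω‖ ^ 2 ∂μ ≤ q (t + 1) := by
      have h7 := integral_nonneg (μ := μ) (f := fun ω => ‖w t ω‖ ^ 2) fun ω => sq_nonneg _
      linarith [hIdent t]
    have h1 : q t ≤ (Real.sqrt (q (t + 1)) + s) ^ 2 := by
      have h2 : Real.sqrt (∫ ω, ‖y t ω‖ ^ 2 ∂μ) ≤ Real.sqrt (q (t + 1)) :=
        Real.sqrt_le_sqrt hY
      have h3 := hexp.2
      nlinarith [Real.sqrt_nonneg (∫ ω, ‖y t ω‖ ^ 2 ∂μ), Real.sqrt_nonneg (q (t + 1))]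
    calc Real.sqrt (q t) ≤ Real.sqrt ((Real.sqrt (q (t + 1)) + s) ^ 2) := Real.sqrt_le_sqrt h1
      _ = Real.sqrt (q (t + 1)) + s := Real.sqrt_sq (by positivity)
  -- forward induction
  have fwd : ∀ τ j : ℕ, Real.sqrt (q (τ * k + j)) ≤ Real.sqrt (c + j * σ2) + j * s := by
    intro τ j
    induction j with
    | zero =>
      simpa using Real.sqrt_le_sqrt (hsub' τ)
    | succ j ih =>
      have hstep := stepF (τ * k + j)
      have hidx : τ * k + (j + 1) = (τ * k + j) + 1 := by omega
      have h := aux_step hc hσ2_nonneg hs_nonneg (Nat.cast_nonneg (α := ℝ) j) ih hstep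
      rw [hidx]
      push_cast
      push_cast at h
      exact h
  -- backward induction
  have bwd : ∀ i t τ : ℕ, t + i = (τ + 1) * k →
      Real.sqrt (q t) ≤ Real.sqrt c + (i : ℝ) * s := by
    intro i
    induction i with
    | zero =>
      intro t τ ht
      have h1 : t = (τ + 1) * k := by omega
      subst h1
      simpa using Real.sqrt_le_sqrt (hsub' (τ + 1))
    | succ i ih =>
      intro t τ ht
      have h1 := stepB t
      have h2 := ih (t + 1) τ (by omega)
      push_cast
      linarith
  -- main bound
  have hmain : ∀ n, n < k → ∀ τ : ℕ, q (τ * k + n) ≤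
      2 * (c + (n : ℝ) ^ 2 * ρ ^ 2 * ‖L‖ ^ 2) + (k : ℝ) * σ2 := by
    intro n hn τ
    have hns2 : (n : ℝ) ^ 2 * s ^ 2 = (n : ℝ) ^ 2 * ρ ^ 2 * ‖L‖ ^ 2 := by
      rw [hs_def]; ring
    rcases le_or_gt (2 * n) k with hcase | hcase
    · -- forward
      have hk2 : 2 * (n : ℝ) ≤ (k : ℝ) := by exact_mod_cast hcase
      have key := aux_caseA hc hσ2_nonneg hs_nonneg (Nat.cast_nonneg (α := ℝ) n) hk2
        (fwd τ n) (hq_nonneg (τ * k + n))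
      rw [hns2] at key
      exact key
    · -- backward
      have hmle : k - n ≤ n := by omega
      have hnk : n ≤ k := le_of_lt hn
      have heq : (τ * k + n) + (k - n) = (τ + 1) * k := by
        have h1 : n + (k - n) = k := by omega
        calc τ * k + n + (k - n) = τ * k + (n + (k - n)) := by rw [Nat.add_assoc]
          _ = τ * k + k := by rw [h1]
          _ = (τ + 1) * k := by ring
      have h := bwd (k - n) (τ * k + n) τ heq
      have hcast : ((k - n : ℕ) : ℝ) ≤ (n : ℝ) := by exact_mod_cast hmle
      have key := aux_caseB hc hs_nonneg hσ2_nonneg (Nat.cast_nonneg (α := ℝ) (k - n)) hcast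
        (Nat.cast_nonneg (α := ℝ) k) h (hq_nonneg (τ * k + n))
      rw [hns2] at key
      exact key
  constructor
  · intro n hn τ
    rw [← hqe (τ * k + n)]
    exact hmain n hn τ
  refine ⟨2 * (c + (k : ℝ) ^ 2 * ρ ^ 2 * ‖L‖ ^ 2) + (k : ℝ) * σ2, fun t => ?_⟩
  rw [← hqe t]
  have hmod : t % k < k := Nat.mod_lt t hk
  have hdiv : t / k * k + t % k = t := Nat.div_add_mod' t k
  have h := hmain (t % k) hmod (t / k)
  rw [hdiv] at h
  have h1 : ((t % k : ℕ) : ℝ) ≤ (k : ℝ) := by exact_mod_cast le_of_lt hmod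
  exact aux_enlarge h (Nat.cast_nonneg (α := ℝ) (t % k)) h1 (sq_nonneg ρ) (sq_nonneg ‖L‖)
end
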